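/- Assume (q) and let f ∈ C¹[0,1] with f(0)=0, h := f′. Let c* be the threshold such that problem (P_c⁰⁰) admits a (unique) solution if and only if c ≥ c*. Then c* ≥ max{ sup_{φ∈(0,1]} f(φ)/φ , h(0) + 2·√( liminf_{φ→0⁺} q(φ)/φ ) }. -/

import Mathlib

open Set Filter Topology MeasureTheory

noncomputable section

/-- `z` is a solution of the singular first-order ODE ż(φ) = h(φ) − c − q(φ)/z(φ)
on (0,1), negative on (0,1), and continuous on [0,1]. -/
def SolODE (h q : ℝ → ℝ) (c : ℝ) (z : ℝ → ℝ) : Prop :=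
  ContinuousOn z (Icc 0 1) ∧
  (∀ φ ∈ Ioo (0:ℝ) 1, HasDerivAt z (h φ - c - q φ / z φ) φ) ∧
  (∀ φ ∈ Ioo (0:ℝ) 1, z φ < 0)

/-- Problem (P_c): the singular ODE with the left boundary condition z(0) = 0. -/
def PC (h q : ℝ → ℝ) (c : ℝ) (z : ℝ → ℝ) : Prop :=
  SolODE h q c z ∧ z 0 = 0

/-- Problem (P_c⁰⁰): the singular ODE with the two boundary conditions z(0) = z(1) = 0. -/
def PC00 (h q : ℝ → ℝ) (c : ℝ) (z : ℝ → ℝ) : Prop :=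
  PC h q c z ∧ z 1 = 0

set_option maxHeartbeats 1000000 in
/-- lower bound for the critical threshold c* of problem (P_c⁰⁰). -/
theorem stmt_7 (f h q : ℝ → ℝ) (cstar : ℝ)
    (hq_cont : ContinuousOn q (Icc 0 1))
    (hq_pos : ∀ φ ∈ Ioo (0:ℝ) 1, 0 < q φ)
    (hq0 : q 0 = 0) (hq1 : q 1 = 0)
    (hq_lim : ∃ L : ℝ, ∀ᶠ φ in 𝓝[>] (0:ℝ), q φ / φ ≤ L)
    (hf0 : f 0 = 0)
    (hf' : ∀ x ∈ Icc (0:ℝ) 1, HasDerivWithinAt f (h x) (Icc 0 1) x)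
    (hh_cont : ContinuousOn h (Icc 0 1))
    (hcstar : ∀ c : ℝ, (∃ z : ℝ → ℝ, PC00 h q c z) ↔ cstar ≤ c) :
    max (sSup ((fun φ => f φ / φ) '' Ioc (0:ℝ) 1))
        (h 0 + 2 * Real.sqrt (Filter.liminf (fun φ => q φ / φ) (𝓝[>] (0:ℝ)))) ≤ cstar := by
  obtain ⟨z, ⟨⟨⟨hz_cont, hz_ode, hz_neg⟩, hz0⟩, hz1⟩⟩ := (hcstar cstar).mpr le_rfl
  have hf_cont : ContinuousOn f (Icc 0 1) := fun x hx => (hf' x hx).continuousWithinAt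
  -- Step A : comparison z φ ≥ f φ - c φ
  have hmono : StrictMonoOn (fun φ => z φ - f φ + cstar * φ) (Icc 0 1) := by
    apply strictMonoOn_of_deriv_pos (convex_Icc 0 1)
    · exact (hz_cont.sub hf_cont).add (continuousOn_const.mul continuousOn_id)
    · intro x hx
      rw [interior_Icc] at hx
      have hxI : x ∈ Icc (0:ℝ) 1 := Ioo_subset_Icc_self hx
      have hzd := hz_ode x hx
      have hfd : HasDerivAt f (h x) x :=
        (hf' x hxI).hasDerivAt (Icc_mem_nhds hx.1 hx.2)
      have hFd : HasDerivAt (fun φ => z φ - f φ + cstar * φ)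
          ((h x - cstar - q x / z x) - h x + cstar * 1) x :=
        (hzd.sub hfd).add ((hasDerivAt_id x).const_mul cstar)
      rw [hFd.deriv]
      have hq : q x / z x < 0 := div_neg_of_pos_of_neg (hq_pos x hx) (hz_neg x hx)
      linarith
  have hF : ∀ φ ∈ Icc (0:ℝ) 1, f φ - cstar * φ ≤ z φ := by
    intro φ hφ
    rcases eq_or_lt_of_le hφ.1 with h0 | h0
    · rw [← h0]; simp [hf0, hz0]
    · have := hmono (left_mem_Icc.mpr zero_le_one) hφ h0
      simp only [hz0, hf0] at this
      linarith [this]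
  have hz_nonpos : ∀ φ ∈ Icc (0:ℝ) 1, z φ ≤ 0 := by
    intro φ hφ
    rcases eq_or_lt_of_le hφ.1 with h0 | h0
    · rw [← h0, hz0]
    · rcases eq_or_lt_of_le hφ.2 with h1 | h1
      · rw [h1, hz1]
      · exact (hz_neg φ ⟨h0, h1⟩).le
  have hfc : ∀ φ ∈ Ioc (0:ℝ) 1, f φ / φ ≤ cstar := by
    intro φ hφ
    have h1 := hF φ ⟨hφ.1.le, hφ.2⟩
    have h2 := hz_nonpos φ ⟨hφ.1.le, hφ.2⟩
    rw [div_le_iff₀ hφ.1]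
    linarith
  have hA : sSup ((fun φ => f φ / φ) '' Ioc (0:ℝ) 1) ≤ cstar := by
    apply csSup_le ((nonempty_Ioc.mpr zero_lt_one).image _)
    rintro x ⟨φ, hφ, rfl⟩
    exact hfc φ hφ
  -- Step B : h 0 ≤ cstar
  have hslope : Tendsto (fun φ => f φ / φ) (𝓝[>] (0:ℝ)) (𝓝 (h 0)) := by
    have hts := (hasDerivWithinAt_iff_tendsto_slope).mp (hf' 0 (left_mem_Icc.mpr zero_le_one))
    rw [show (Icc (0:ℝ) 1) \ {0} = Ioc 0 1 from Icc_diff_left,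
      nhdsWithin_Ioc_eq_nhdsGT zero_lt_one] at hts
    apply hts.congr'
    filter_upwards [self_mem_nhdsWithin] with φ hφ
    simp [slope_def_field, hf0]
  have hIoo : Ioo (0:ℝ) 1 ∈ 𝓝[>] (0:ℝ) :=
    Ioo_mem_nhdsGT_of_mem ⟨le_refl 0, zero_lt_one⟩
  have hB0 : h 0 ≤ cstar := by
    apply le_of_tendsto hslope
    filter_upwards [hIoo] with φ hφ
    exact hfc φ ⟨hφ.1, hφ.2.le⟩
  -- Step C : liminf lower bound
  set l := Filter.liminf (fun φ => q φ / φ) (𝓝[>] (0:ℝ)) with hl_def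
  have hB2 : h 0 + 2 * Real.sqrt l ≤ cstar := by
    by_contra hcon
    push_neg at hcon
    -- eventual lower bounds from the liminf
    have hbdd : IsBoundedUnder (· ≥ ·) (𝓝[>] (0:ℝ)) (fun φ => q φ / φ) := by
      apply isBoundedUnder_of_eventually_ge (a := (0:ℝ))
      filter_upwards [hIoo] with φ hφ
      exact (div_pos (hq_pos φ hφ) hφ.1).le
    have hev_q : ∀ e : ℝ, 0 < e → ∀ᶠ φ in 𝓝[>] (0:ℝ), l - e < q φ / φ := by
      intro e he
      exact eventually_lt_of_lt_liminf (by rw [← hl_def]; linarith) hbdd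
    clear_value l
    set d := cstar - h 0 with hd_def
    set η := l - d ^ 2 / 4 with hη_def
    set B := d + 1 with hB_def
    set ε := η / (2 * (B + 1)) with hε_def
    set K := η / (4 * B) with hK_def
    clear_value d η B ε K
    have hd0 : 0 ≤ d := by rw [hd_def]; linarith
    have hsq : d < 2 * Real.sqrt l := by rw [hd_def]; linarith
    have hsqrt_pos : 0 < Real.sqrt l := by linarith
    have hl_pos : 0 < l := Real.sqrt_pos.mp hsqrt_pos
    have hd2 : d ^ 2 < 4 * l := by
      have t1 : d * d ≤ d * (2 * Real.sqrt l) := mul_le_mul_of_nonneg_left hsq.le hd0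
      have t2 : d * (2 * Real.sqrt l) < (2 * Real.sqrt l) * (2 * Real.sqrt l) :=
        mul_lt_mul_of_pos_right hsq (by positivity)
      have t3 : (2 * Real.sqrt l) * (2 * Real.sqrt l) = 4 * l := by
        have := Real.mul_self_sqrt hl_pos.le
        nlinarith [this]
      have t4 : d ^ 2 = d * d := sq d
      linarith
    have hη_pos : 0 < η := by rw [hη_def]; linarith
    have hB_pos : 0 < B := by rw [hB_def]; linarith
    have hε_pos : 0 < ε := by rw [hε_def]; positivity
    have hK_pos : 0 < K := by rw [hK_def]; positivity
    have hεB : ε * (B + 1) = η / 2 := by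
      rw [hε_def]
      field_simp
    have hBK : B * (2 * K) = η / 2 := by
      rw [hK_def]
      field_simp
      ring
    have hh_tendsto : Tendsto h (𝓝[>] (0:ℝ)) (𝓝 (h 0)) := by
      refine ((hh_cont 0 (left_mem_Icc.mpr zero_le_one)).tendsto).mono_left ?_
      rw [nhdsWithin_Icc_eq_nhdsGE zero_lt_one]
      exact nhdsWithin_mono _ Ioi_subset_Ici_self
    have hev_h : ∀ᶠ φ in 𝓝[>] (0:ℝ), h 0 - ε < h φ :=
      hh_tendsto.eventually (lt_mem_nhds (by linarith))
    have hev_f : ∀ᶠ φ in 𝓝[>] (0:ℝ), h 0 - 1 < f φ / φ :=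
      hslope.eventually (lt_mem_nhds (by linarith))
    have hall : ∀ᶠ φ in 𝓝[>] (0:ℝ),
        φ ∈ Ioo (0:ℝ) 1 ∧ l - ε < q φ / φ ∧ h 0 - ε < h φ ∧ h 0 - 1 < f φ / φ := by
      filter_upwards [hIoo, hev_q ε hε_pos, hev_h, hev_f] with φ a b c' d'
      exact ⟨a, b, c', d'⟩
    obtain ⟨δ, hδ_pos, hδ_sub⟩ := mem_nhdsGT_iff_exists_Ioo_subset.mp hall
    rw [mem_Ioi] at hδ_pos
    -- set-up on (0, δ₀]
    set δ₀ := δ / 2 with hδ₀_def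
    have hδ₀_pos : 0 < δ₀ := by positivity
    have hδ₀_lt : δ₀ < δ := by simp only [hδ₀_def]; linarith
    have hsub : Ioc (0:ℝ) δ₀ ⊆ Ioo 0 δ := fun x hx => ⟨hx.1, lt_of_le_of_lt hx.2 hδ₀_lt⟩
    -- pointwise bound : -B ≤ z x / x for x in the good set
    have hu_lb : ∀ x ∈ Ioo (0:ℝ) δ, -B ≤ z x / x := by
      intro x hx
      obtain ⟨hx1, _, _, hxf⟩ := hδ_sub hx
      have hxpos : (0:ℝ) < x := hx1.1
      have h1 := hF x ⟨hx1.1.le, hx1.2.le⟩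
      have h2 : (f x - cstar * x) / x ≤ z x / x :=
        div_le_div_of_nonneg_right h1 hxpos.le
      have h3 : (f x - cstar * x) / x = f x / x - cstar := by
        field_simp
      rw [h3] at h2
      rw [hB_def, hd_def]
      linarith
    -- the auxiliary increasing function g
    set g := fun φ => z φ / φ - K * Real.log φ with hg_def
    have hgmono : StrictMonoOn g (Ioc 0 δ₀) := by
      apply strictMonoOn_of_deriv_pos (convex_Ioc 0 δ₀)
      · apply ContinuousOn.sub
        · apply ContinuousOn.div
          · apply hz_cont.mono
            intro x hx
            have := hδ_sub (hsub hx)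
            exact ⟨hx.1.le, this.1.2.le⟩
          · exact continuousOn_id
          · intro x hx; exact ne_of_gt hx.1
        · exact continuousOn_const.mul
            (Real.continuousOn_log.mono (fun x hx => ne_of_gt hx.1))
      · intro x hx
        rw [interior_Ioc] at hx
        have hxδ : x ∈ Ioo (0:ℝ) δ := ⟨hx.1, lt_trans hx.2 hδ₀_lt⟩
        obtain ⟨hx1, hxq, hxh, hxf⟩ := hδ_sub hxδ
        have hxpos : (0:ℝ) < x := hx1.1
        have hxne : x ≠ 0 := ne_of_gt hxpos
        have hzx_neg : z x < 0 := hz_neg x hx1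
        -- derivative of g at x
        have hzd := hz_ode x hx1
        have hgd : HasDerivAt g
            (((h x - cstar - q x / z x) * x - z x * 1) / x ^ 2 - K * x⁻¹) x :=
          (hzd.div (hasDerivAt_id x) hxne).sub ((Real.hasDerivAt_log hxne).const_mul K)
        rw [hgd.deriv]
        -- key Riccati inequality
        set v := -(z x / x) with hv_def
        set r := q x / x with hr_def
        clear_value v r
        have hzx_ne : z x ≠ 0 := ne_of_lt hzx_neg
        have hv_pos : 0 < v := by
          rw [hv_def]
          have : z x / x < 0 := div_neg_of_neg_of_pos hzx_neg hxpos
          linarith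
        have hv_le : v ≤ B := by
          have := hu_lb x hxδ
          rw [hv_def]; linarith
        have hv_ne : v ≠ 0 := ne_of_gt hv_pos
        have hA_eq : (h x - cstar - q x / z x) - z x / x = h x - cstar + r / v + v := by
          rw [hv_def, hr_def]
          field_simp [hzx_ne]
          ring
        have hexpand : v * (h x - cstar + r / v + v) = v * (h x - cstar) + r + v ^ 2 := by
          field_simp
        have hkey : η / 2 ≤ v * (h x - cstar + r / v + v) := by
          rw [hexpand]
          have hr_lb : l - ε < r := hxq
          have hh_lb : h 0 - ε < h x := hxh
          have e1 : v * (h 0 - ε - cstar) ≤ v * (h x - cstar) :=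
            mul_le_mul_of_nonneg_left (by linarith) hv_pos.le
          have e2 : v * (h 0 - ε - cstar) = -(v * d) - v * ε := by rw [hd_def]; ring
          have e3 : 0 ≤ v ^ 2 - v * d + d ^ 2 / 4 := by
            have t1 : (0:ℝ) ≤ (v - d / 2) ^ 2 := sq_nonneg _
            have t2 : (v - d / 2) ^ 2 = v ^ 2 - v * d + d ^ 2 / 4 := by ring
            linarith
          have e4 : v * ε ≤ B * ε := mul_le_mul_of_nonneg_right hv_le hε_pos.le
          have e5 : ε * B + ε = η / 2 := by rw [← hεB]; ring
          linarith [e1, e2, e3, e4, e5, hr_lb, hη_def.ge, hη_def.le]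
        have hA_lb : 2 * K ≤ (h x - cstar - q x / z x) - z x / x := by
          rw [hA_eq]
          by_contra hcc
          push_neg at hcc
          have h4 : v * (h x - cstar + r / v + v) < v * (2 * K) :=
            mul_lt_mul_of_pos_left hcc hv_pos
          have h5 : v * (2 * K) ≤ B * (2 * K) :=
            mul_le_mul_of_nonneg_right hv_le (by positivity)
          linarith [hBK]
        -- conclude positivity of the derivative
        have h7 : ((h x - cstar - q x / z x) * x - z x * 1) / x ^ 2
            = ((h x - cstar - q x / z x) - z x / x) / x := by
          rw [mul_one, sq, ← div_div, sub_div, mul_div_assoc, div_self hxne, mul_one]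
        rw [h7]
        have h8 : 2 * K / x ≤ ((h x - cstar - q x / z x) - z x / x) / x :=
          div_le_div_of_nonneg_right hA_lb hxpos.le
        have h9 : K * x⁻¹ = K / x := by rw [div_eq_mul_inv]
        have h10 : K / x < 2 * K / x := by
          rw [div_lt_div_iff₀ hxpos hxpos]
          have t1 : 0 < K * x := mul_pos hK_pos hxpos
          linarith
        rw [h9]
        linarith
    -- final contradiction : z φ / φ must go to -∞
    have hlog : ∀ᶠ φ in 𝓝[>] (0:ℝ), Real.log φ < (-B - g δ₀) / K :=
      Real.tendsto_log_nhdsGT_zero.eventually (eventually_lt_atBot _)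
    have hIoo₀ : Ioo (0:ℝ) δ₀ ∈ 𝓝[>] (0:ℝ) :=
      Ioo_mem_nhdsGT_of_mem ⟨le_refl 0, hδ₀_pos⟩
    obtain ⟨φ₀, hφ₀_log, hφ₀_mem⟩ := (hlog.and (eventually_of_mem hIoo₀ (fun x hx => hx))).exists
    have hφ₀δ : φ₀ ∈ Ioo (0:ℝ) δ := ⟨hφ₀_mem.1, lt_trans hφ₀_mem.2 hδ₀_lt⟩
    have hlt : g φ₀ < g δ₀ :=
      hgmono ⟨hφ₀_mem.1, hφ₀_mem.2.le⟩ ⟨hδ₀_pos, le_refl δ₀⟩ hφ₀_mem.2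
    have hKlog : K * Real.log φ₀ < -B - g δ₀ := by
      have := mul_lt_mul_of_pos_left hφ₀_log hK_pos
      rw [mul_div_cancel₀ _ (ne_of_gt hK_pos)] at this
      linarith
    have hval : z φ₀ / φ₀ = g φ₀ + K * Real.log φ₀ := by
      simp only [hg_def]; ring
    have hlb := hu_lb φ₀ hφ₀δ
    rw [hval] at hlb
    linarith
  exact max_le hA hB2
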